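/- arXiv:1112.3577 — 3 statements merged into one kernel-verified Lean document; each statement's English description precedes it below -/
import Mathlib

section
/- A nonzero vector v ∈ Λᵏℝⁿ with coordinates v = Σ_{1≤i₁<…<i_k≤n} μ_{i₁…i_k} e_{i₁}∧…∧e_{i_k} is decomposable if and only if for all indices 1 ≤ i₁ < … < i_{k+1} ≤ n and 1 ≤ j₁ < … < j_{k-1} ≤ n the Plücker relations Σ_{p=1}^{k+1} (−1)ᵖ μ_{i₁…ı̂_p…i_{k+1}} μ_{i_p j₁…j_{k-1}} = 0 hold, where ı̂_p denotes omission of the index i_p, and where μ with a repeated index is zero and μ with an unordered index tuple is defined by full antisymmetry in its indices. -/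
open scoped BigOperators

/-- The index set `Π` of strictly increasing `k`-tuples from `{1,…,n}`,
realized as `k`-element subsets of `Fin n`. -/
abbrev PIdx (n k : ℕ) : Type := {s : Finset (Fin n) // s.card = k}

/-- The strictly increasing tuple `(i₁ < … < i_k)` enumerating `α ∈ Π`. -/
noncomputable def toTuple {n k : ℕ} (α : PIdx n k) : Fin k → Fin n :=
  fun j => (α.1.orderIsoOfFin α.2 j : Fin n)

/-- Coordinates of the decomposable vector `x₁ ∧ … ∧ x_k` in the standard basis
`{e_α : α ∈ Π}` of `Λᵏℝⁿ`:  the `α`-coordinate is the `k × k` minor of the matrix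
whose rows are the `xᵢ`, taken on the columns listed by `α`. -/
noncomputable def wedgeCoords {R : Type} [CommRing R] {n k : ℕ} (x : Fin k → Fin n → R) :
    PIdx n k → R :=
  fun α => Matrix.det (Matrix.of fun i j => x i (toTuple α j))

/-- The model of `Λᵏℝⁿ` inside polynomials: a vector `w = Σ w_α e_α` is sent to the
linear polynomial `Σ_α w_α • X_α`.  The `m`-th symmetric power `Sᵐ(Λᵏℝⁿ)` is then the
space of homogeneous polynomials of degree `m` in the variables `X_α`, the symmetric
product `∨` being polynomial multiplication. -/
noncomputable def linPoly {R : Type} [CommRing R] {n k : ℕ} (w : PIdx n k → R) :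
    MvPolynomial (PIdx n k) R :=
  ∑ α, MvPolynomial.C (w α) * MvPolynomial.X α

/-- `V₀(m,n,k)`: the linear span of the `m`-th powers `(x₁ ∧ … ∧ x_k)ᵐ` of decomposable
vectors inside `Sᵐ(Λᵏℝⁿ)` (polynomial model). -/
noncomputable def V0 (m n k : ℕ) : Submodule ℝ (MvPolynomial (PIdx n k) ℝ) :=
  Submodule.span ℝ {p | ∃ x : Fin k → Fin n → ℝ, p = (linPoly (wedgeCoords x)) ^ m}

/-- The sign `ε(f) = ∏_{p<q} sgn(f(q) - f(p))` of a tuple of indices: it is the sign of the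
permutation sorting `f` when `f` is injective, and `0` otherwise. -/
noncomputable def epsSign {k n : ℕ} (f : Fin k → Fin n) : ℝ :=
  ∏ p ∈ Finset.univ.filter (fun p : Fin k × Fin k => p.1 < p.2),
    Real.sign ((f p.2 : ℝ) - (f p.1 : ℝ))

/-- The coordinate function `μ` of a vector `v ∈ Λᵏℝⁿ`, extended to arbitrary index tuples
by full antisymmetry: it vanishes on tuples with a repeated index, and on an injective tuple
it equals the sign of the sorting permutation times the coordinate at the sorted tuple. -/
noncomputable def coordExt {n k : ℕ} (v : PIdx n k → ℝ) (f : Fin k → Fin n) : ℝ :=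
  if h : Function.Injective f then
    epsSign f * v ⟨Finset.univ.image f, by
      rw [Finset.card_image_of_injective _ h, Finset.card_univ, Fintype.card_fin]⟩
  else 0

/-! ### Auxiliary lemmas -/

section Aux

open Finset

lemma real_sign_mul (x y : ℝ) : Real.sign (x * y) = Real.sign x * Real.sign y := by
  rcases lt_trichotomy x 0 with hx | rfl | hx
  · rcases lt_trichotomy y 0 with hy | rfl | hy
    · rw [Real.sign_of_neg hx, Real.sign_of_neg hy,
        Real.sign_of_pos (mul_pos_of_neg_of_neg hx hy)]; ring
    · simp [Real.sign_zero]
    · rw [Real.sign_of_neg hx, Real.sign_of_pos hy,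
        Real.sign_of_neg (mul_neg_of_neg_of_pos hx hy)]; ring
  · simp [Real.sign_zero]
  · rcases lt_trichotomy y 0 with hy | rfl | hy
    · rw [Real.sign_of_pos hx, Real.sign_of_neg hy,
        Real.sign_of_neg (mul_neg_of_pos_of_neg hx hy)]; ring
    · simp [Real.sign_zero]
    · rw [Real.sign_of_pos hx, Real.sign_of_pos hy, Real.sign_of_pos (mul_pos hx hy)]; ring

lemma real_sign_prod {ι : Type*} (s : Finset ι) (g : ι → ℝ) :
    Real.sign (∏ i ∈ s, g i) = ∏ i ∈ s, Real.sign (g i) := by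
  induction s using Finset.cons_induction with
  | empty => simp [Real.sign_one]
  | cons a s ha ih => rw [Finset.prod_cons, Finset.prod_cons, real_sign_mul, ih]

lemma prod_pairs_eq {N : ℕ} (g : Fin N → Fin N → ℝ) :
    ∏ p ∈ Finset.univ.filter (fun p : Fin N × Fin N => p.1 < p.2), g p.1 p.2
      = ∏ i : Fin N, ∏ j ∈ Finset.Ioi i, g i j := by
  rw [Finset.prod_sigma']
  refine Finset.prod_nbij' (fun p => ⟨p.1, p.2⟩) (fun x => (x.1, x.2)) ?_ ?_ ?_ ?_ ?_
  · intro p hp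
    simp only [Finset.mem_filter, Finset.mem_univ, true_and] at hp
    simp [Finset.mem_Ioi, hp]
  · intro x hx
    simp only [Finset.mem_sigma, Finset.mem_univ, Finset.mem_Ioi, true_and] at hx
    simp [hx]
  · intro p _; rfl
  · intro x _; rfl
  · intro p _; rfl

lemma epsSign_eq {k n : ℕ} (f : Fin k → Fin n) :
    epsSign f = Real.sign (Matrix.det (Matrix.vandermonde (fun p => ((f p : ℝ) : ℝ)))) := by
  rw [Matrix.det_vandermonde, real_sign_prod, epsSign,
    prod_pairs_eq (fun a b => Real.sign ((f b : ℝ) - (f a : ℝ)))]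
  exact Finset.prod_congr rfl fun i _ => (real_sign_prod _ _).symm

lemma epsSign_comp_perm {k n : ℕ} (f : Fin k → Fin n) (σ : Equiv.Perm (Fin k)) :
    epsSign (f ∘ σ) = ((Equiv.Perm.sign σ : ℤ) : ℝ) * epsSign f := by
  rw [epsSign_eq, epsSign_eq f]
  have h1 : Matrix.vandermonde (fun p => (((f ∘ σ) p : ℝ) : ℝ))
      = (Matrix.vandermonde fun p => ((f p : ℝ) : ℝ)).submatrix σ id := by
    ext i j; simp [Matrix.vandermonde]
  rw [h1, Matrix.det_permute]
  rcases Int.units_eq_one_or (Equiv.Perm.sign σ) with h | h <;> rw [h] <;> push_cast <;>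
    simp [Real.sign_neg]

lemma epsSign_strictMono {k n : ℕ} {f : Fin k → Fin n} (hf : StrictMono f) : epsSign f = 1 := by
  rw [epsSign]
  apply Finset.prod_eq_one
  intro p hp
  rw [Finset.mem_filter] at hp
  have h1 : (f p.1 : ℝ) < (f p.2 : ℝ) := by exact_mod_cast hf hp.2
  exact Real.sign_of_pos (by linarith)

lemma coordExt_of_injective {n k : ℕ} (v : PIdx n k → ℝ) {f : Fin k → Fin n}
    (h : Function.Injective f) :
    coordExt v f = epsSign f * v ⟨Finset.univ.image f, by
      rw [Finset.card_image_of_injective _ h, Finset.card_univ, Fintype.card_fin]⟩ := by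
  rw [coordExt, dif_pos h]

lemma coordExt_of_not_injective {n k : ℕ} (v : PIdx n k → ℝ) {f : Fin k → Fin n}
    (h : ¬ Function.Injective f) : coordExt v f = 0 := dif_neg h

lemma vcongr {n k : ℕ} (v : PIdx n k → ℝ) {s t : Finset (Fin n)} {hs : s.card = k}
    {ht : t.card = k} (h : s = t) : v ⟨s, hs⟩ = v ⟨t, ht⟩ := by
  subst h; rfl

lemma coordExt_comp_perm {n k : ℕ} (v : PIdx n k → ℝ) (f : Fin k → Fin n)
    (σ : Equiv.Perm (Fin k)) :
    coordExt v (f ∘ σ) = ((Equiv.Perm.sign σ : ℤ) : ℝ) * coordExt v f := by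
  by_cases h : Function.Injective f
  · have h2 : Function.Injective (f ∘ σ) := h.comp σ.injective
    have himg : Finset.univ.image (f ∘ σ) = Finset.univ.image f := by
      rw [← Finset.image_image, Finset.image_univ_equiv]
    rw [coordExt_of_injective v h, coordExt_of_injective v h2, epsSign_comp_perm,
      vcongr v himg]
    ring
    exact (Finset.card_image_of_injective _ h).trans (by simp)
  · have h2 : ¬ Function.Injective (f ∘ σ) := by
      intro h2
      exact h (by
        have : f = (f ∘ σ) ∘ σ.symm := by funext t; simp
        rw [this]; exact h2.comp σ.symm.injective)
    rw [coordExt_of_not_injective v h, coordExt_of_not_injective v h2, mul_zero]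

lemma toTuple_strictMono {n k : ℕ} (α : PIdx n k) : StrictMono (toTuple α) := by
  intro p q hpq
  exact (α.1.orderIsoOfFin α.2).strictMono hpq

lemma image_toTuple {n k : ℕ} (α : PIdx n k) : Finset.univ.image (toTuple α) = α.1 := by
  ext q
  simp only [Finset.mem_image, Finset.mem_univ, true_and, toTuple]
  constructor
  · rintro ⟨p, rfl⟩; exact (α.1.orderIsoOfFin α.2 p).2
  · intro hq; exact ⟨(α.1.orderIsoOfFin α.2).symm ⟨q, hq⟩, by simp⟩

lemma coordExt_strictMono {n k : ℕ} (v : PIdx n k → ℝ) {f : Fin k → Fin n}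
    (hf : StrictMono f) :
    coordExt v f = v ⟨Finset.univ.image f, by
      rw [Finset.card_image_of_injective _ hf.injective, Finset.card_univ,
        Fintype.card_fin]⟩ := by
  rw [coordExt_of_injective v hf.injective, epsSign_strictMono hf, one_mul]

lemma exists_comp_perm {n k : ℕ} {f g : Fin k → Fin n} (hf : Function.Injective f)
    (hg : Function.Injective g) (h : Finset.univ.image f = Finset.univ.image g) :
    ∃ σ : Equiv.Perm (Fin k), f = g ∘ σ := by
  have hmem : ∀ t, ∃ s, g s = f t := by
    intro t
    have : f t ∈ Finset.univ.image g := h ▸ Finset.mem_image_of_mem f (Finset.mem_univ t)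
    obtain ⟨s, -, hs⟩ := Finset.mem_image.mp this
    exact ⟨s, hs⟩
  choose τ hτ using hmem
  have hτinj : Function.Injective τ := fun a b hab => hf (by rw [← hτ a, ← hτ b, hab])
  exact ⟨Equiv.ofBijective τ (Finite.injective_iff_bijective.mp hτinj),
    funext fun t => (hτ t).symm⟩

lemma det_cols_comp_perm {k n : ℕ} (N : Fin k → Fin n → ℝ) (g : Fin k → Fin n)
    (σ : Equiv.Perm (Fin k)) :
    Matrix.det (Matrix.of fun r s => N r (g (σ s)))
      = ((Equiv.Perm.sign σ : ℤ) : ℝ) * Matrix.det (Matrix.of fun r s => N r (g s)) := by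
  have h1 : (Matrix.of fun r s => N r (g (σ s)))
      = (Matrix.of fun r s => N r (g s)).submatrix id σ := rfl
  rw [h1, Matrix.det_permute']

lemma det_cols_not_inj {k n : ℕ} (N : Fin k → Fin n → ℝ) {g : Fin k → Fin n}
    (hg : ¬ Function.Injective g) :
    Matrix.det (Matrix.of fun r s => N r (g s)) = 0 := by
  rw [Function.not_injective_iff] at hg
  obtain ⟨s, s', hss, hne⟩ := hg
  exact Matrix.det_zero_of_column_eq hne fun r => by simp [hss]

lemma dite_eq_cons {n m : ℕ} (z : Fin n) (j : Fin m → Fin n) :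
    (fun t : Fin (m + 1) => if ht : (t : ℕ) = 0 then z
      else j ⟨(t : ℕ) - 1, by have := t.isLt; omega⟩) = Fin.cons z j := by
  funext t
  rcases Fin.eq_zero_or_eq_succ t with rfl | ⟨t', rfl⟩
  · rw [dif_pos (show ((0 : Fin (m + 1)) : ℕ) = 0 from rfl), Fin.cons_zero]
  · have hne : ((t'.succ : Fin (m + 1)) : ℕ) ≠ 0 := by simp
    rw [dif_neg hne, Fin.cons_succ]
    congr 1

lemma image_cons {n m : ℕ} (z : Fin n) (j : Fin m → Fin n) :
    Finset.univ.image (Fin.cons z j : Fin (m + 1) → Fin n)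
      = insert z (Finset.univ.image j) := by
  ext q
  simp only [Finset.mem_image, Finset.mem_univ, true_and, Finset.mem_insert]
  constructor
  · rintro ⟨t, rfl⟩
    rcases Fin.eq_zero_or_eq_succ t with rfl | ⟨t', rfl⟩
    · left; rw [Fin.cons_zero]
    · right; exact ⟨t', by simp⟩
  · rintro (rfl | ⟨t', rfl⟩)
    · exact ⟨0, by simp⟩
    · exact ⟨t'.succ, by simp⟩

lemma image_comp_succAbove {n m : ℕ} {i : Fin (m + 2) → Fin n} (hi : Function.Injective i)
    (p : Fin (m + 2)) :
    Finset.univ.image (fun t => i (p.succAbove t))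
      = (Finset.univ.image i).erase (i p) := by
  have h1 : Finset.univ.image (fun t => i (p.succAbove t))
      = (Finset.univ.image p.succAbove).image i := by
    rw [Finset.image_image]; rfl
  rw [h1, Fin.image_succAbove_univ]
  ext q
  simp only [Finset.mem_image, Finset.mem_compl, Finset.mem_singleton, Finset.mem_erase,
    Finset.mem_univ, true_and]
  constructor
  · rintro ⟨t, ht, rfl⟩
    exact ⟨fun h => ht (hi h), t, rfl⟩
  · rintro ⟨hq, t, rfl⟩
    exact ⟨t, fun h => hq (by rw [h]), rfl⟩

lemma update_eq_cons_comp {X : Type*} {m : ℕ} (a : Fin (m + 1) → X) (r : Fin (m + 1)) (q : X) :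
    Function.update a r q
      = (Fin.cons q (fun t => a (r.succAbove t))) ∘ (Fin.cycleRange r) := by
  funext t
  rcases lt_trichotomy t r with h | rfl | h
  · rw [Function.comp_apply, Fin.cycleRange_of_lt h, Function.update_of_ne (ne_of_lt h)]
    have ht : (t : ℕ) < m := by
      have h1 : (t : ℕ) < (r : ℕ) := h
      have h2 : (r : ℕ) < m + 1 := r.isLt
      omega
    have h3 : t + 1 = Fin.succ ⟨(t : ℕ), ht⟩ := by
      apply Fin.ext
      rw [Fin.val_add_one_of_lt (lt_of_lt_of_le h (Fin.le_last r))]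
      simp
    rw [h3, Fin.cons_succ]
    congr 1
    apply Fin.ext
    rw [Fin.succAbove_of_castSucc_lt]
    · simp
    · simp only [Fin.lt_def, Fin.coe_castSucc]; exact h
  · rw [Function.comp_apply, Fin.cycleRange_self, Fin.cons_zero, Function.update_self]
  · rw [Function.comp_apply, Fin.cycleRange_of_gt h, Function.update_of_ne (ne_of_gt h)]
    have ht0 : t ≠ 0 := by
      intro h0
      rw [h0] at h
      exact (Fin.not_lt_zero r) h
    have h2 : (Fin.cons q (fun t' => a (r.succAbove t')) : Fin (m + 1) → X) t
        = a (r.succAbove (t.pred ht0)) := by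
      conv_lhs => rw [show t = (t.pred ht0).succ from (Fin.succ_pred t ht0).symm]
      rw [Fin.cons_succ]
    rw [h2]
    congr 1
    rw [Fin.succAbove_of_le_castSucc _ _ (by
      rw [Fin.le_def]
      simp only [Fin.coe_castSucc, Fin.coe_pred]
      have h1 : (r : ℕ) < (t : ℕ) := h
      omega)]
    exact (Fin.succ_pred t ht0).symm

/-- Replacing the entry at position `r` of a tuple by `q`, expressed via `coordExt`. -/
lemma coordExt_update {n m : ℕ} (v : PIdx n (m + 1) → ℝ) (a : Fin (m + 1) → Fin n)
    (r : Fin (m + 1)) (q : Fin n) :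
    coordExt v (Function.update a r q)
      = (-1 : ℝ) ^ (r : ℕ) * coordExt v (Fin.cons q (fun t => a (r.succAbove t))) := by
  rw [update_eq_cons_comp, coordExt_comp_perm, Fin.sign_cycleRange]
  push_cast
  ring

/-- The Plücker determinant identity. -/
lemma pluecker_det {n m : ℕ} (x : Fin (m + 1) → Fin n → ℝ) (i : Fin (m + 2) → Fin n)
    (j : Fin m → Fin n) :
    ∑ p : Fin (m + 2), (-1 : ℝ) ^ ((p : ℕ) + 1) *
      (Matrix.det (Matrix.of fun r s => x r (i (p.succAbove s))) *
        Matrix.det (Matrix.of fun r s => x r ((Fin.cons (i p) j : Fin (m + 1) → Fin n) s))) = 0 := by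
  have expand : ∀ p : Fin (m + 2),
      Matrix.det (Matrix.of fun r s => x r ((Fin.cons (i p) j : Fin (m + 1) → Fin n) s))
        = ∑ r : Fin (m + 1), (-1 : ℝ) ^ (r : ℕ) * x r (i p) *
            Matrix.det (Matrix.of fun r' s' => x (r.succAbove r') (j s')) := by
    intro p
    rw [Matrix.det_succ_column_zero]
    refine Finset.sum_congr rfl fun r _ => ?_
    rfl
  have key : ∀ r : Fin (m + 1),
      ∑ p : Fin (m + 2), (-1 : ℝ) ^ (p : ℕ) * x r (i p) *
          Matrix.det (Matrix.of fun r' s => x r' (i (p.succAbove s))) = 0 := by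
    intro r
    have h0 : (Matrix.of fun (q : Fin (m + 2)) (p' : Fin (m + 2)) =>
        (Fin.cons (fun p'' => x r (i p'')) (fun r' p'' => x r' (i p'')) :
          Fin (m + 2) → Fin (m + 2) → ℝ) q p').det = 0 := by
      apply Matrix.det_zero_of_row_eq (Fin.succ_ne_zero r).symm
      funext p'
      simp
    rw [Matrix.det_succ_row_zero] at h0
    simpa only [Matrix.submatrix, Matrix.of_apply, Fin.cons_zero, Fin.cons_succ] using h0
  have step1 : (∑ p : Fin (m + 2), (-1 : ℝ) ^ ((p : ℕ) + 1) *
      (Matrix.det (Matrix.of fun r s => x r (i (p.succAbove s))) *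
        Matrix.det (Matrix.of fun r s => x r ((Fin.cons (i p) j : Fin (m + 1) → Fin n) s))))
      = ∑ r : Fin (m + 1), ∑ p : Fin (m + 2),
          ((-1 : ℝ) ^ ((r : ℕ) + 1) *
              Matrix.det (Matrix.of fun r' s' => x (r.succAbove r') (j s'))) *
            ((-1 : ℝ) ^ (p : ℕ) * x r (i p) *
              Matrix.det (Matrix.of fun r' s => x r' (i (p.succAbove s)))) := by
    rw [Finset.sum_comm]
    refine Finset.sum_congr rfl fun p _ => ?_
    rw [expand p, Finset.mul_sum, Finset.mul_sum]
    refine Finset.sum_congr rfl fun r _ => ?_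
    ring
  rw [step1]
  refine Finset.sum_eq_zero fun r _ => ?_
  rw [← Finset.mul_sum, key r, mul_zero]

lemma vcongr' {n k : ℕ} (v : PIdx n k → ℝ) {s : Finset (Fin n)} {hs : s.card = k}
    (α : PIdx n k) (h : s = α.1) : v ⟨s, hs⟩ = v α := by
  subst h; rfl

lemma coordExt_strictMono' {n k : ℕ} (v : PIdx n k → ℝ) {f : Fin k → Fin n}
    (hf : StrictMono f) (α : PIdx n k) (h : Finset.univ.image f = α.1) :
    coordExt v f = v α := by
  rw [coordExt_strictMono v hf]
  exact vcongr' v α h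

lemma coordExt_wedge {n m : ℕ} (x : Fin (m + 1) → Fin n → ℝ) (g : Fin (m + 1) → Fin n) :
    coordExt (wedgeCoords x) g = Matrix.det (Matrix.of fun r s => x r (g s)) := by
  by_cases hg : Function.Injective g
  · have hcard : (Finset.univ.image g).card = m + 1 := by
      rw [Finset.card_image_of_injective _ hg, Finset.card_univ, Fintype.card_fin]
    set α : PIdx n (m + 1) := ⟨Finset.univ.image g, hcard⟩ with hα
    obtain ⟨σ, hσ⟩ := exists_comp_perm hg (toTuple_strictMono α).injective
      (by rw [image_toTuple])
    rw [coordExt_of_injective _ hg]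
    have h1 : epsSign g = ((Equiv.Perm.sign σ : ℤ) : ℝ) := by
      rw [hσ, epsSign_comp_perm, epsSign_strictMono (toTuple_strictMono α), mul_one]
    have h2 : Matrix.det (Matrix.of fun r s => x r (g s))
        = ((Equiv.Perm.sign σ : ℤ) : ℝ)
            * Matrix.det (Matrix.of fun r s => x r (toTuple α s)) := by
      conv_lhs => rw [hσ]
      exact det_cols_comp_perm x (toTuple α) σ
    rw [h2, h1]
    congr 1
  · rw [coordExt_of_not_injective _ hg, det_cols_not_inj x hg]

lemma pluecker_backward {n m : ℕ} (v : PIdx n (m + 1) → ℝ) (α₀ : PIdx n (m + 1))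
    (hc : v α₀ ≠ 0)
    (hrel : ∀ (i : Fin (m + 2) → Fin n), StrictMono i → ∀ (j : Fin m → Fin n), StrictMono j →
      ∑ p : Fin (m + 2), (-1 : ℝ) ^ ((p : ℕ) + 1) *
        (coordExt v (fun t => i (p.succAbove t)) * coordExt v (Fin.cons (i p) j)) = 0) :
    ∀ g : Fin (m + 1) → Fin n,
      coordExt v g * (v α₀) ^ m
        = Matrix.det (Matrix.of fun r s =>
            coordExt v (Function.update (toTuple α₀) r (g s))) := by
  set a := toTuple α₀ with ha
  have haS : StrictMono a := toTuple_strictMono α₀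
  have haimg : Finset.univ.image a = α₀.1 := image_toTuple α₀
  suffices H : ∀ t : ℕ, ∀ g : Fin (m + 1) → Fin n,
      (Finset.univ.image g \ α₀.1).card = t →
      coordExt v g * (v α₀) ^ m
        = Matrix.det (Matrix.of fun r s => coordExt v (Function.update a r (g s))) by
    intro g; exact H _ g rfl
  intro t
  induction t using Nat.strong_induction_on with
  | _ t IH =>
  intro g hgcard
  by_cases hginj : Function.Injective g
  swap
  · rw [coordExt_of_not_injective _ hginj, zero_mul]
    exact (det_cols_not_inj (fun r q => coordExt v (Function.update a r q)) hginj).symm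
  have hgimgcard : (Finset.univ.image g).card = m + 1 := by
    rw [Finset.card_image_of_injective _ hginj, Finset.card_univ, Fintype.card_fin]
  rcases Nat.eq_zero_or_pos t with rfl | ht
  · -- base case: the image of `g` is exactly `α₀`
    have hNdiag : ∀ r s' : Fin (m + 1), coordExt v (Function.update a r (a s'))
        = if s' = r then v α₀ else 0 := by
      intro r s'
      by_cases h : s' = r
      · subst h
        rw [Function.update_eq_self, if_pos rfl]
        exact coordExt_strictMono' v haS α₀ haimg
      · rw [if_neg h]
        apply coordExt_of_not_injective
        have h1 : Function.update a r (a s') s' = Function.update a r (a s') r := by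
          rw [Function.update_of_ne h, Function.update_self]
        exact fun hinj => h (hinj h1)
    have hdiagdet : Matrix.det (Matrix.of fun r s => coordExt v (Function.update a r (a s)))
        = (v α₀) ^ (m + 1) := by
      have hmat : (Matrix.of fun r s => coordExt v (Function.update a r (a s)))
          = Matrix.diagonal (fun _ : Fin (m + 1) => v α₀) := by
        ext r s
        rw [Matrix.of_apply, hNdiag r s, Matrix.diagonal_apply]
        by_cases h : s = r
        · subst h; simp
        · rw [if_neg h, if_neg (Ne.symm h)]
      rw [hmat, Matrix.det_diagonal, Finset.prod_const]
      simp
    have hsub : Finset.univ.image g ⊆ α₀.1 := by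
      rw [← Finset.sdiff_eq_empty_iff_subset]
      exact Finset.card_eq_zero.mp hgcard
    have himg : Finset.univ.image g = α₀.1 :=
      Finset.eq_of_subset_of_card_le hsub (le_of_eq (by rw [α₀.2, hgimgcard]))
    obtain ⟨σ, hσ⟩ := exists_comp_perm hginj haS.injective (by rw [himg, haimg])
    rw [hσ, coordExt_comp_perm, coordExt_strictMono' v haS α₀ haimg]
    simp only [Function.comp_apply]
    rw [det_cols_comp_perm (fun r' q => coordExt v (Function.update a r' q)) a σ, hdiagdet,
      pow_succ]
    ring
  · -- inductive step
    have hne : (Finset.univ.image g \ α₀.1).Nonempty := by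
      rw [← Finset.card_pos, hgcard]; exact ht
    obtain ⟨b, hb⟩ := hne
    rw [Finset.mem_sdiff] at hb
    obtain ⟨hbF, hbA⟩ := hb
    have hBcard : (insert b α₀.1).card = m + 2 := by
      rw [Finset.card_insert_of_notMem hbA, α₀.2]
    set β : PIdx n (m + 2) := ⟨insert b α₀.1, hBcard⟩ with hβ
    set i := toTuple β with hi
    have hiS : StrictMono i := toTuple_strictMono β
    have hiimg : Finset.univ.image i = insert b α₀.1 := image_toTuple β
    have hJcard : ((Finset.univ.image g).erase b).card = m := by
      rw [Finset.card_erase_of_mem hbF, hgimgcard]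
      omega
    set γ : PIdx n m := ⟨(Finset.univ.image g).erase b, hJcard⟩ with hγ
    set j := toTuple γ with hj
    have hjS : StrictMono j := toTuple_strictMono γ
    have hjimg : Finset.univ.image j = (Finset.univ.image g).erase b := image_toTuple γ
    obtain ⟨pb, hpb⟩ : ∃ pb, i pb = b := by
      have h1 : b ∈ Finset.univ.image i := by
        rw [hiimg]; exact Finset.mem_insert_self b _
      obtain ⟨pb, -, h2⟩ := Finset.mem_image.mp h1
      exact ⟨pb, h2⟩
    have hdagger := hrel i hiS j hjS
    -- the determinant-side analogue of the Plücker relation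
    have hG : ∑ p : Fin (m + 2), (-1 : ℝ) ^ ((p : ℕ) + 1) *
        (coordExt v (fun t' => i (p.succAbove t')) *
          Matrix.det (Matrix.of fun r s =>
            coordExt v (Function.update a r ((Fin.cons (i p) j : Fin (m + 1) → Fin n) s)))) = 0 := by
      have hexp : ∀ q : Fin n,
          Matrix.det (Matrix.of fun r s =>
            coordExt v (Function.update a r ((Fin.cons q j : Fin (m + 1) → Fin n) s)))
            = ∑ r : Fin (m + 1), (-1 : ℝ) ^ (r : ℕ) * coordExt v (Function.update a r q) *
                Matrix.det (Matrix.of fun r' s' =>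
                  coordExt v (Function.update a (r.succAbove r') (j s'))) := by
        intro q
        rw [Matrix.det_succ_column_zero]
        exact Finset.sum_congr rfl fun r _ => rfl
      have hkey : ∀ r : Fin (m + 1),
          ∑ p : Fin (m + 2), (-1 : ℝ) ^ ((p : ℕ) + 1) *
            (coordExt v (fun t' => i (p.succAbove t')) *
              coordExt v (Function.update a r (i p))) = 0 := by
        intro r
        have hjr : StrictMono (fun t' : Fin m => a (r.succAbove t')) :=
          haS.comp (Fin.strictMono_succAbove r)
        have h1 := hrel i hiS (fun t' => a (r.succAbove t')) hjr
        calc ∑ p : Fin (m + 2), (-1 : ℝ) ^ ((p : ℕ) + 1) *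
              (coordExt v (fun t' => i (p.succAbove t')) *
                coordExt v (Function.update a r (i p)))
            = (-1 : ℝ) ^ (r : ℕ) * ∑ p : Fin (m + 2), (-1 : ℝ) ^ ((p : ℕ) + 1) *
              (coordExt v (fun t' => i (p.succAbove t')) *
                coordExt v (Fin.cons (i p) (fun t' => a (r.succAbove t')))) := by
              rw [Finset.mul_sum]
              refine Finset.sum_congr rfl fun p _ => ?_
              rw [coordExt_update v a r (i p)]
              ring
          _ = 0 := by rw [h1, mul_zero]
      have hstep : (∑ p : Fin (m + 2), (-1 : ℝ) ^ ((p : ℕ) + 1) *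
          (coordExt v (fun t' => i (p.succAbove t')) *
            Matrix.det (Matrix.of fun r s =>
              coordExt v (Function.update a r ((Fin.cons (i p) j : Fin (m + 1) → Fin n) s)))))
          = ∑ r : Fin (m + 1), ∑ p : Fin (m + 2),
              ((-1 : ℝ) ^ (r : ℕ) *
                  Matrix.det (Matrix.of fun r' s' =>
                    coordExt v (Function.update a (r.succAbove r') (j s')))) *
                ((-1 : ℝ) ^ ((p : ℕ) + 1) *
                  (coordExt v (fun t' => i (p.succAbove t')) *
                    coordExt v (Function.update a r (i p)))) := by
        rw [Finset.sum_comm]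
        refine Finset.sum_congr rfl fun p _ => ?_
        rw [hexp (i p), Finset.mul_sum, Finset.mul_sum]
        refine Finset.sum_congr rfl fun r _ => ?_
        ring
      rw [hstep]
      refine Finset.sum_eq_zero fun r _ => ?_
      rw [← Finset.mul_sum, hkey r, mul_zero]
    -- combination of (†) and hG
    have hcomb : ∑ p : Fin (m + 2), (-1 : ℝ) ^ ((p : ℕ) + 1) *
        (coordExt v (fun t' => i (p.succAbove t')) *
          (coordExt v (Fin.cons (i p) j) * (v α₀) ^ m -
            Matrix.det (Matrix.of fun r s =>
              coordExt v (Function.update a r ((Fin.cons (i p) j : Fin (m + 1) → Fin n) s))))) = 0 := by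
      have e1 : ∑ p : Fin (m + 2), (-1 : ℝ) ^ ((p : ℕ) + 1) *
          (coordExt v (fun t' => i (p.succAbove t')) *
            (coordExt v (Fin.cons (i p) j) * (v α₀) ^ m -
              Matrix.det (Matrix.of fun r s =>
                coordExt v (Function.update a r ((Fin.cons (i p) j : Fin (m + 1) → Fin n) s)))))
          = (∑ p : Fin (m + 2), (-1 : ℝ) ^ ((p : ℕ) + 1) *
              (coordExt v (fun t => i (p.succAbove t)) * coordExt v (Fin.cons (i p) j))) * (v α₀) ^ m
            - ∑ p : Fin (m + 2), (-1 : ℝ) ^ ((p : ℕ) + 1) *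
                (coordExt v (fun t' => i (p.succAbove t')) *
                  Matrix.det (Matrix.of fun r s =>
                    coordExt v (Function.update a r ((Fin.cons (i p) j : Fin (m + 1) → Fin n) s)))) := by
        rw [Finset.sum_mul, ← Finset.sum_sub_distrib]
        refine Finset.sum_congr rfl fun p _ => ?_
        ring
      rw [e1, hdagger, hG, zero_mul, sub_zero]
    -- all terms except `pb` vanish by the induction hypothesis
    have hzero : ∀ p : Fin (m + 2), p ≠ pb →
        coordExt v (Fin.cons (i p) j) * (v α₀) ^ m =
          Matrix.det (Matrix.of fun r s =>
            coordExt v (Function.update a r ((Fin.cons (i p) j : Fin (m + 1) → Fin n) s))) := by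
      intro p hp
      have hipA : i p ∈ α₀.1 := by
        have h1 : i p ∈ insert b α₀.1 := by
          rw [← hiimg]; exact Finset.mem_image_of_mem i (Finset.mem_univ p)
        rcases Finset.mem_insert.mp h1 with h2 | h2
        · exact absurd (hiS.injective (h2.trans hpb.symm)) hp
        · exact h2
      have hcard' : (Finset.univ.image (Fin.cons (i p) j : Fin (m + 1) → Fin n) \ α₀.1).card
          = t - 1 := by
        rw [image_cons, hjimg]
        have hJA : (insert (i p) ((Finset.univ.image g).erase b)) \ α₀.1
            = (Finset.univ.image g \ α₀.1).erase b := by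
          ext q
          simp only [Finset.mem_sdiff, Finset.mem_insert, Finset.mem_erase]
          constructor
          · rintro ⟨hq1 | hq1, hq2⟩
            · exact absurd (hq1 ▸ hipA) hq2
            · exact ⟨hq1.1, hq1.2, hq2⟩
          · rintro ⟨hq1, hq2, hq3⟩
            exact ⟨Or.inr ⟨hq1, hq2⟩, hq3⟩
        rw [hJA, Finset.card_erase_of_mem (Finset.mem_sdiff.mpr ⟨hbF, hbA⟩), hgcard]
      exact IH (t - 1) (by omega) _ hcard'
    have hpb0 : (-1 : ℝ) ^ ((pb : ℕ) + 1) *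
        (coordExt v (fun t' => i (pb.succAbove t')) *
          (coordExt v (Fin.cons (i pb) j) * (v α₀) ^ m -
            Matrix.det (Matrix.of fun r s =>
              coordExt v (Function.update a r ((Fin.cons (i pb) j : Fin (m + 1) → Fin n) s))))) = 0 := by
      rw [← hcomb]
      symm
      apply Finset.sum_eq_single_of_mem pb (Finset.mem_univ pb)
      intro p _ hp
      simp only [hzero p hp, sub_self, mul_zero]
    have hWpb : coordExt v (fun t' => i (pb.succAbove t')) = v α₀ := by
      apply coordExt_strictMono' v (hiS.comp (Fin.strictMono_succAbove pb)) α₀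
      show Finset.univ.image (fun t => i (pb.succAbove t)) = α₀.1
      rw [image_comp_succAbove hiS.injective pb, hiimg, hpb, Finset.erase_insert hbA]
    rw [hWpb] at hpb0
    have hbr : coordExt v (Fin.cons (i pb) j) * (v α₀) ^ m
        = Matrix.det (Matrix.of fun r s =>
            coordExt v (Function.update a r ((Fin.cons (i pb) j : Fin (m + 1) → Fin n) s))) := by
      have h1 : ((-1 : ℝ) ^ ((pb : ℕ) + 1)) ≠ 0 := pow_ne_zero _ (by norm_num)
      rcases mul_eq_zero.mp hpb0 with h2 | h2
      · exact absurd h2 h1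
      rcases mul_eq_zero.mp h2 with h3 | h3
      · exact absurd h3 hc
      · exact sub_eq_zero.mp h3
    have hconsinj : Function.Injective (Fin.cons (i pb) j : Fin (m + 1) → Fin n) := by
      rw [Fin.cons_injective_iff]
      refine ⟨?_, hjS.injective⟩
      rw [hpb]
      rintro ⟨t', ht'⟩
      have h1 : b ∈ Finset.univ.image j :=
        Finset.mem_image.mpr ⟨t', Finset.mem_univ t', ht'⟩
      rw [hjimg] at h1
      exact (Finset.notMem_erase b _) h1
    have hconsimg : Finset.univ.image (Fin.cons (i pb) j : Fin (m + 1) → Fin n)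
        = Finset.univ.image g := by
      rw [image_cons, hjimg, hpb, Finset.insert_erase hbF]
    obtain ⟨σ, hσ⟩ := exists_comp_perm hginj hconsinj hconsimg.symm
    rw [hσ, coordExt_comp_perm]
    simp only [Function.comp_apply]
    rw [det_cols_comp_perm (fun r' q => coordExt v (Function.update a r' q))
      (Fin.cons (i pb) j) σ, ← hbr]
    ring

end Aux

/-- **Plücker relations.** A nonzero vector
`v = Σ μ_{i₁…i_k} e_{i₁}∧…∧e_{i_k} ∈ Λᵏℝⁿ` is decomposable (i.e. equals
`x₁ ∧ … ∧ x_k` for some `xᵢ ∈ ℝⁿ`, here expressed through its Plücker coordinates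
`wedgeCoords x`) if and only if for all `1 ≤ i₁ < … < i_{k+1} ≤ n` and
`1 ≤ j₁ < … < j_{k-1} ≤ n` the relations
`Σ_{p=1}^{k+1} (−1)ᵖ μ_{i₁…ı̂_p…i_{k+1}} μ_{i_p j₁…j_{k-1}} = 0` hold, where `μ` is
extended to arbitrary tuples by full antisymmetry (`coordExt`). -/
theorem decomposable_iff_pluecker (n k : ℕ) (hk : 1 ≤ k) (hkn : k ≤ n)
    (v : PIdx n k → ℝ) (hv : v ≠ 0) :
    (∃ x : Fin k → Fin n → ℝ, v = wedgeCoords x) ↔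
      ∀ (i : Fin (k + 1) → Fin n), StrictMono i →
        ∀ (j : Fin (k - 1) → Fin n), StrictMono j →
          ∑ p : Fin (k + 1), (-1 : ℝ) ^ ((p : ℕ) + 1) *
            (coordExt v (fun t => i (p.succAbove t)) *
              coordExt v (fun t : Fin k =>
                if ht : (t : ℕ) = 0 then i p
                else j ⟨(t : ℕ) - 1, by have := t.isLt; omega⟩)) = 0 := by
  obtain ⟨m, rfl⟩ : ∃ m, k = m + 1 := ⟨k - 1, by omega⟩
  show (∃ x : Fin (m + 1) → Fin n → ℝ, v = wedgeCoords x) ↔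
      ∀ (i : Fin (m + 2) → Fin n), StrictMono i →
        ∀ (j : Fin m → Fin n), StrictMono j →
          ∑ p : Fin (m + 2), (-1 : ℝ) ^ ((p : ℕ) + 1) *
            (coordExt v (fun t => i (p.succAbove t)) *
              coordExt v (fun t : Fin (m + 1) =>
                if ht : (t : ℕ) = 0 then i p
                else j ⟨(t : ℕ) - 1, by have := t.isLt; omega⟩)) = 0
  constructor
  · rintro ⟨x, rfl⟩ i hi j hj
    simp only [dite_eq_cons, coordExt_wedge]
    exact pluecker_det x i j
  · intro hrel
    obtain ⟨α₀, hα₀⟩ := Function.ne_iff.mp hv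
    have hrel' : ∀ (i : Fin (m + 2) → Fin n), StrictMono i →
        ∀ (j : Fin m → Fin n), StrictMono j →
        ∑ p : Fin (m + 2), (-1 : ℝ) ^ ((p : ℕ) + 1) *
          (coordExt v (fun t => i (p.succAbove t)) * coordExt v (Fin.cons (i p) j)) = 0 := by
      intro i hi j hj
      have h1 := hrel i hi j hj
      simpa only [dite_eq_cons] using h1
    have H := pluecker_backward v α₀ hα₀ hrel'
    refine ⟨fun r q => (if r = (0 : Fin (m + 1)) then (1 : ℝ) else (v α₀)⁻¹) *
      coordExt v (Function.update (toTuple α₀) r q), ?_⟩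
    funext α
    have h1 := H (toTuple α)
    rw [coordExt_strictMono' v (toTuple_strictMono α) α (image_toTuple α)] at h1
    show v α = Matrix.det (Matrix.of fun r s =>
      (if r = (0 : Fin (m + 1)) then (1 : ℝ) else (v α₀)⁻¹) *
        coordExt v (Function.update (toTuple α₀) r (toTuple α s)))
    have e2 : Matrix.det (Matrix.of fun r s =>
        (if r = (0 : Fin (m + 1)) then (1 : ℝ) else (v α₀)⁻¹) *
          coordExt v (Function.update (toTuple α₀) r (toTuple α s)))
        = (∏ r : Fin (m + 1), (if r = (0 : Fin (m + 1)) then (1 : ℝ) else (v α₀)⁻¹)) *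
            Matrix.det (Matrix.of fun r s =>
              coordExt v (Function.update (toTuple α₀) r (toTuple α s))) :=
      Matrix.det_mul_column _ _
    have hprod : (∏ r : Fin (m + 1), (if r = (0 : Fin (m + 1)) then (1 : ℝ) else (v α₀)⁻¹))
        = ((v α₀)⁻¹) ^ m := by
      rw [Fin.prod_univ_succ, if_pos rfl,
        Finset.prod_congr rfl fun (t : Fin m) _ => if_neg (Fin.succ_ne_zero t),
        Finset.prod_const, Finset.card_univ, Fintype.card_fin, one_mul]
    rw [e2, ← h1, hprod]
    have hcm : (v α₀) ^ m ≠ 0 := pow_ne_zero m hα₀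
    rw [inv_pow, eq_comm, inv_mul_eq_iff_eq_mul₀ hcm]
    ring
end

section
/- The subspace V₀(m,n,k) coincides with the linear span of the set of vectors (x₁∧y₂∧…∧y_k) ∨ (x₂∧y₂∧…∧y_k) ∨ … ∨ (x_m∧y₂∧…∧y_k), where x₁,…,x_m, y₂,…,y_k range over ℝⁿ. -/
open scoped BigOperators

open Finset in
lemma aux_sum_powerset {R : Type*} [CommRing R] {α : Type*} [DecidableEq α]
    (A : Finset α) :
    ∑ U ∈ A.powerset, (-1 : R) ^ (A.card - U.card) = if A = ∅ then 1 else 0 := by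
  have h : ∀ U ∈ A.powerset, (-1 : R) ^ (A.card - U.card) = (-1) ^ A.card * (-1) ^ U.card := by
    intro U hU
    have hle : U.card ≤ A.card := card_le_card (mem_powerset.mp hU)
    have h2 : (-1 : R) ^ (A.card - U.card) * (-1) ^ U.card = (-1) ^ A.card := by
      rw [← pow_add, Nat.sub_add_cancel hle]
    calc (-1 : R) ^ (A.card - U.card)
        = (-1 : R) ^ (A.card - U.card) * ((-1) ^ U.card * (-1) ^ U.card) := by
          rw [← pow_add, ← two_mul, pow_mul]; simp
      _ = (-1) ^ A.card * (-1) ^ U.card := by rw [← mul_assoc, h2]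
  rw [Finset.sum_congr rfl h, ← Finset.mul_sum]
  have hz : (∑ U ∈ A.powerset, (-1 : R) ^ U.card)
      = ((∑ U ∈ A.powerset, (-1 : ℤ) ^ U.card : ℤ) : R) := by push_cast; rfl
  rw [hz, Finset.sum_powerset_neg_one_pow_card]
  split_ifs with hA
  · subst hA; simp
  · simp

open Finset in
lemma aux_sum_superset {R : Type*} [CommRing R] {α : Type*} [DecidableEq α] [Fintype α]
    (T : Finset α) :
    ∑ S : Finset α, (if T ⊆ S then (-1 : R) ^ (Fintype.card α - S.card) else 0)
      = if T = univ then 1 else 0 := by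
  rw [← Finset.sum_filter]
  rw [Finset.sum_nbij' (i := fun S => S \ T) (j := fun U => T ∪ U)
    (t := Tᶜ.powerset) (g := fun U => (-1 : R) ^ (Tᶜ.card - U.card))]
  · rw [aux_sum_powerset]
    congr 1
    simp [Finset.eq_empty_iff_forall_notMem, Finset.eq_univ_iff_forall]
  · intro S hS
    simp only [mem_filter, mem_univ, true_and] at hS
    simp only [mem_powerset]
    intro a ha
    simp only [mem_sdiff] at ha
    simp [ha.2]
  · intro U hU
    simp
  · intro S hS
    simp only [mem_filter, mem_univ, true_and] at hS
    exact union_sdiff_of_subset hS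
  · intro U hU
    simp only [mem_powerset] at hU
    apply union_sdiff_cancel_left
    rw [Finset.disjoint_left]
    intro a haT haU
    exact (mem_compl.mp (hU haU)) haT
  · intro S hS
    simp only [mem_filter, mem_univ, true_and] at hS
    congr 1
    have h1 : (S \ T).card = S.card - T.card := card_sdiff_of_subset hS
    have h2 : T.card ≤ S.card := card_le_card hS
    have h3 : S.card ≤ Fintype.card α := by
      simpa using card_le_card (subset_univ S)
    have h4 : Tᶜ.card = Fintype.card α - T.card := by simp [card_compl]
    omega

open Finset in
lemma aux_polarization {R : Type*} [CommRing R] (m : ℕ) (z : Fin m → R) :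
    ∑ S : Finset (Fin m), (-1 : R) ^ (m - S.card) * (∑ s ∈ S, z s) ^ m
      = (m.factorial : R) * ∏ s, z s := by
  classical
  have h1 : ∀ S : Finset (Fin m), (∑ s ∈ S, z s) ^ m
      = ∑ g ∈ Fintype.piFinset (fun _ : Fin m => S), ∏ i, z (g i) := by
    intro S
    rw [← Finset.prod_univ_sum]
    simp
  have hpi : ∀ S : Finset (Fin m), Fintype.piFinset (fun _ : Fin m => S)
      = univ.filter (fun g : Fin m → Fin m => Finset.image g univ ⊆ S) := by
    intro S
    ext g
    simp [Fintype.mem_piFinset, Finset.image_subset_iff]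
  calc ∑ S : Finset (Fin m), (-1 : R) ^ (m - S.card) * (∑ s ∈ S, z s) ^ m
      = ∑ S : Finset (Fin m), ∑ g : Fin m → Fin m,
          if Finset.image g univ ⊆ S then (-1 : R) ^ (m - S.card) * ∏ i, z (g i) else 0 := by
        refine Finset.sum_congr rfl fun S _ => ?_
        rw [h1, hpi, Finset.sum_filter, Finset.mul_sum]
        refine Finset.sum_congr rfl fun g _ => ?_
        rw [mul_ite, mul_zero]
    _ = ∑ g : Fin m → Fin m, (∏ i, z (g i)) *
          ∑ S : Finset (Fin m), (if Finset.image g univ ⊆ S then (-1 : R) ^ (m - S.card) else 0) := by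
        rw [Finset.sum_comm]
        refine Finset.sum_congr rfl fun g _ => ?_
        rw [Finset.mul_sum]
        refine Finset.sum_congr rfl fun S _ => ?_
        rw [mul_ite, mul_zero, mul_comm]
    _ = ∑ g : Fin m → Fin m, (∏ i, z (g i)) *
          (if Finset.image g univ = univ then 1 else 0) := by
        refine Finset.sum_congr rfl fun g _ => ?_
        congr 1
        have h := aux_sum_superset (R := R) (Finset.image g univ)
        simpa using h
    _ = ∑ g ∈ univ.filter (fun g : Fin m → Fin m => Finset.image g univ = univ), ∏ i, z (g i) := by
        rw [Finset.sum_filter]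
        exact Finset.sum_congr rfl fun g _ => by rw [mul_ite, mul_one, mul_zero]
    _ = ∑ _g ∈ univ.filter (fun g : Fin m → Fin m => Finset.image g univ = univ), ∏ s, z s := by
        refine Finset.sum_congr rfl fun g hg => ?_
        simp only [mem_filter] at hg
        have hsurj : Function.Surjective g := by
          intro b
          have hb : b ∈ Finset.image g univ := by rw [hg.2]; exact mem_univ b
          simpa using hb
        exact (Finite.surjective_iff_bijective.mp hsurj).prod_comp z
    _ = (m.factorial : R) * ∏ s, z s := by
        rw [Finset.sum_const, nsmul_eq_mul]
        congr 1
        have hc : (univ.filter (fun g : Fin m → Fin m => Finset.image g univ = univ)).card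
            = Fintype.card {g : Fin m → Fin m // Finset.image g univ = univ} :=
          (Fintype.card_subtype _).symm
        rw [hc]
        have e : {g : Fin m → Fin m // Finset.image g univ = univ} ≃ Equiv.Perm (Fin m) := by
          refine ⟨fun g => Equiv.ofBijective g.1 ?_, fun σ => ⟨σ, ?_⟩, ?_, ?_⟩
          · apply Finite.surjective_iff_bijective.mp
            intro b
            have hb : b ∈ Finset.image g.1 univ := by rw [g.2]; exact mem_univ b
            simpa using hb
          · rw [Finset.eq_univ_iff_forall]
            intro b
            simp only [Finset.mem_image, mem_univ, true_and]
            exact ⟨σ.symm b, by simp⟩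
          · intro g; exact Subtype.ext rfl
          · intro σ; exact Equiv.ext fun x => rfl
        rw [Fintype.card_congr e, Fintype.card_perm, Fintype.card_fin]

section RowLinearity

variable {n k : ℕ}

lemma wedgeCoords_update_add (y : Fin k → Fin n → ℝ) (i0 : Fin k) (a b : Fin n → ℝ) :
    ∀ α, wedgeCoords (Function.update y i0 (a + b)) α
      = wedgeCoords (Function.update y i0 a) α + wedgeCoords (Function.update y i0 b) α := by
  intro α
  have hM : ∀ (v : Fin n → ℝ),
      (Matrix.of fun i j => Function.update y i0 v i (toTuple α j))
        = Matrix.updateRow (Matrix.of fun i j => y i (toTuple α j)) i0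
            (fun j => v (toTuple α j)) := by
    intro v
    ext i j
    rw [Matrix.updateRow_apply]
    by_cases h : i = i0 <;> simp [h, Function.update]
  simp only [wedgeCoords, hM]
  have := Matrix.det_updateRow_add (Matrix.of fun i j => y i (toTuple α j)) i0
    (fun j => a (toTuple α j)) (fun j => b (toTuple α j))
  simpa [Pi.add_def] using this

/-- The map `v ↦ linPoly (wedgeCoords (update y i0 v))` as an additive homomorphism. -/
noncomputable def rowHom (y : Fin k → Fin n → ℝ) (i0 : Fin k) :
    (Fin n → ℝ) →+ MvPolynomial (PIdx n k) ℝ :=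
  AddMonoidHom.mk' (fun v => linPoly (wedgeCoords (Function.update y i0 v))) (by
    intro a b
    simp only [linPoly, wedgeCoords_update_add y i0 a b, map_add, add_mul,
      Finset.sum_add_distrib])

lemma rowHom_sum (y : Fin k → Fin n → ℝ) (i0 : Fin k) {m : ℕ} (x : Fin m → Fin n → ℝ)
    (S : Finset (Fin m)) :
    linPoly (wedgeCoords (Function.update y i0 (∑ s ∈ S, x s)))
      = ∑ s ∈ S, linPoly (wedgeCoords (Function.update y i0 (x s))) := by
  exact map_sum (rowHom y i0) x S

end RowLinearity

/-- `V₀(m,n,k)` coincides with the linear span of the vectors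
`(x₁∧y₂∧…∧y_k) ∨ (x₂∧y₂∧…∧y_k) ∨ … ∨ (x_m∧y₂∧…∧y_k)`, where `x₁,…,x_m,y₂,…,y_k`
range over `ℝⁿ`.  (Here `y : Fin k → Fin n → ℝ` and only its rows `2,…,k` matter,
since row `1` is overwritten by `x_s` in the `s`-th factor.) -/
theorem V0_eq_span_products (m n k : ℕ) (hm : 1 ≤ m) (hk : 1 ≤ k) (hkn : k ≤ n) :
    V0 m n k =
      Submodule.span ℝ {p | ∃ (x : Fin m → Fin n → ℝ) (y : Fin k → Fin n → ℝ),
        p = ∏ s : Fin m,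
          linPoly (wedgeCoords (Function.update y ⟨0, hk⟩ (x s)))} := by
  classical
  set i0 : Fin k := ⟨0, hk⟩ with hi0
  apply le_antisymm
  · rw [V0]
    apply Submodule.span_le.2
    rintro p ⟨x, rfl⟩
    apply Submodule.subset_span
    refine ⟨fun _ => x i0, x, ?_⟩
    simp [Function.update_eq_self, Finset.prod_const]
  · apply Submodule.span_le.2
    rintro p ⟨x, y, rfl⟩
    set z : Fin m → MvPolynomial (PIdx n k) ℝ :=
      fun s => linPoly (wedgeCoords (Function.update y i0 (x s))) with hz
    have key := aux_polarization (R := MvPolynomial (PIdx n k) ℝ) m z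
    have hfac : (m.factorial : ℝ) ≠ 0 := Nat.cast_ne_zero.mpr (Nat.factorial_ne_zero m)
    have hsum : ∀ S : Finset (Fin m), (∑ s ∈ S, z s) ^ m
        = (linPoly (wedgeCoords (Function.update y i0 (∑ s ∈ S, x s)))) ^ m := by
      intro S
      rw [rowHom_sum]
    have hC : ∀ (r : ℝ) (q : MvPolynomial (PIdx n k) ℝ), r • q = MvPolynomial.C r * q :=
      fun r q => MvPolynomial.smul_eq_C_mul q r
    have hmain : (∏ s, z s) = (m.factorial : ℝ)⁻¹ •
        ∑ S : Finset (Fin m), ((-1 : ℝ) ^ (m - S.card)) •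
          (linPoly (wedgeCoords (Function.update y i0 (∑ s ∈ S, x s)))) ^ m := by
      have h1 : ∑ S : Finset (Fin m), ((-1 : ℝ) ^ (m - S.card)) •
          (linPoly (wedgeCoords (Function.update y i0 (∑ s ∈ S, x s)))) ^ m
          = (m.factorial : MvPolynomial (PIdx n k) ℝ) * ∏ s, z s := by
        rw [← key]
        refine Finset.sum_congr rfl fun S _ => ?_
        rw [hsum S, hC]
        congr 1
        simp [map_pow]
      rw [h1]
      have h2 : (m.factorial : MvPolynomial (PIdx n k) ℝ) * ∏ s, z s
          = (m.factorial : ℝ) • ∏ s, z s := by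
        rw [hC]
        congr 1
      rw [h2, smul_smul, inv_mul_cancel₀ hfac, one_smul]
    rw [hmain]
    apply Submodule.smul_mem
    apply Submodule.sum_mem
    intro S _
    apply Submodule.smul_mem
    apply Submodule.subset_span
    exact ⟨Function.update y i0 (∑ s ∈ S, x s), rfl⟩
end

section
/- For every vector v ∈ V₀(m,n,k) and every chain σ, the orthogonal projection Pr(v,σ) of v onto the subspace L(σ) again belongs to V₀(m,n,k). -/
open scoped BigOperators

/-- `l_i(d)`: the number of occurrences of the index `i` among the tuples composing the
canonical basis vector (monomial) with exponent vector `d`. -/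
def lcount {n k : ℕ} (d : PIdx n k →₀ ℕ) : Fin n → ℕ :=
  fun i => ∑ α : PIdx n k, if i ∈ α.1 then d α else 0

/-- The chain of type `(k₁,…,k_n) = c`: the set of canonical basis vectors (identified with
their exponent vectors `d`, with `Σ d = m`) whose occurrence counts are `(l_i)_d = c`. -/
def chain (m n k : ℕ) (c : Fin n → ℕ) : Set (PIdx n k →₀ ℕ) :=
  {d | (∑ α, d α) = m ∧ lcount d = c}

/-- The condition for `(k₁,…,k_n) = c` to be the type of a chain: `Σ kᵢ = mk`,
each `kᵢ ≤ m`, and at least `k` of the `kᵢ` are nonzero. -/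
def IsChainType (m n k : ℕ) (c : Fin n → ℕ) : Prop :=
  (∑ i, c i) = m * k ∧ (∀ i, c i ≤ m) ∧ k ≤ (Finset.univ.filter fun i => c i ≠ 0).card

/-- `L(σ)`: the linear span of the chain of type `c`. -/
noncomputable def Lchain (m n k : ℕ) (c : Fin n → ℕ) :
    Submodule ℝ (MvPolynomial (PIdx n k) ℝ) :=
  Submodule.span ℝ {p | ∃ d ∈ chain m n k c, p = MvPolynomial.monomial d 1}

open Classical in
/-- `Pr(·,σ)`: the orthogonal projection onto `L(σ)` with respect to the inner product
making the canonical basis orthonormal; it keeps exactly the coefficients of the canonical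
basis vectors lying in the chain `σ` and kills all the others. -/
noncomputable def projChain (m n k : ℕ) (c : Fin n → ℕ)
    (p : MvPolynomial (PIdx n k) ℝ) : MvPolynomial (PIdx n k) ℝ :=
  ∑ d ∈ p.support, if d ∈ chain m n k c then MvPolynomial.monomial d (p.coeff d) else 0

/-! ### Auxiliary material -/

section Aux

open MvPolynomial Classical

/-- Vandermonde extraction: if all the "polynomial values" `∑ x^j • w j` lie in a
submodule `W`, then each coefficient `w j` lies in `W`. -/
lemma vand_extract {M : Type*} [AddCommGroup M] [Module ℝ M] (W : Submodule ℝ M)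
    (N : ℕ) (w : ℕ → M)
    (h : ∀ x : ℝ, (∑ j ∈ Finset.range (N + 1), x ^ j • w j) ∈ W) :
    ∀ j ≤ N, w j ∈ W := by
  intro j hj
  set A : Matrix (Fin (N + 1)) (Fin (N + 1)) ℝ :=
    Matrix.vandermonde (fun i => (i : ℝ)) with hA
  have hdet : A.det ≠ 0 := by
    rw [hA, Matrix.det_vandermonde]
    refine Finset.prod_ne_zero_iff.2 fun i _ => Finset.prod_ne_zero_iff.2 fun l hl => ?_
    have hil : i < l := Finset.mem_Ioi.1 hl
    have : (i : ℝ) < (l : ℝ) := by exact_mod_cast hil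
    exact sub_ne_zero.2 (ne_of_gt this)
  have hinv : A⁻¹ * A = 1 := Matrix.nonsing_inv_mul A (isUnit_iff_ne_zero.2 hdet)
  have key : ∀ i : Fin (N + 1), (∑ l : Fin (N + 1), A i l • w l) ∈ W := by
    intro i
    have hh := h (i : ℝ)
    rw [← Fin.sum_univ_eq_sum_range (fun l => ((i : ℝ)) ^ l • w l) (N + 1)] at hh
    simpa [hA, Matrix.vandermonde] using hh
  set j0 : Fin (N + 1) := ⟨j, Nat.lt_succ_of_le hj⟩ with hj0
  have hw : w j = ∑ i : Fin (N + 1), A⁻¹ j0 i • (∑ l : Fin (N + 1), A i l • w l) := by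
    have h1 : ∀ i : Fin (N + 1), A⁻¹ j0 i • (∑ l : Fin (N + 1), A i l • w l)
        = ∑ l : Fin (N + 1), (A⁻¹ j0 i * A i l) • w l := by
      intro i
      rw [Finset.smul_sum]
      exact Finset.sum_congr rfl fun l _ => (smul_smul _ _ _)
    calc w j = ∑ l : Fin (N + 1), ((1 : Matrix (Fin (N + 1)) (Fin (N + 1)) ℝ) j0 l) • w l := by
          simp [Matrix.one_apply, ite_smul, hj0]
      _ = ∑ l : Fin (N + 1), ((A⁻¹ * A) j0 l) • w l := by rw [hinv]
      _ = ∑ l : Fin (N + 1), (∑ i : Fin (N + 1), A⁻¹ j0 i * A i l) • w l := by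
          simp [Matrix.mul_apply]
      _ = ∑ l : Fin (N + 1), ∑ i : Fin (N + 1), (A⁻¹ j0 i * A i l) • w l := by
          exact Finset.sum_congr rfl fun l _ => Finset.sum_smul
      _ = ∑ i : Fin (N + 1), ∑ l : Fin (N + 1), (A⁻¹ j0 i * A i l) • w l := by
          rw [Finset.sum_comm]
      _ = ∑ i : Fin (N + 1), A⁻¹ j0 i • (∑ l : Fin (N + 1), A i l • w l) := by
          exact Finset.sum_congr rfl fun i _ => (h1 i).symm
  rw [hw]
  exact Submodule.sum_mem _ fun i _ => Submodule.smul_mem _ _ (key i)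

variable {n k : ℕ}

/-- The scaling algebra endomorphism `X_α ↦ (∏_{j∈α} t_j) X_α`. -/
noncomputable def scaleHom (n k : ℕ) (t : Fin n → ℝ) :
    MvPolynomial (PIdx n k) ℝ →ₐ[ℝ] MvPolynomial (PIdx n k) ℝ :=
  MvPolynomial.aeval (fun α : PIdx n k => MvPolynomial.C (∏ j ∈ α.1, t j) * MvPolynomial.X α)

lemma prod_pow_lcount (t : Fin n → ℝ) (d : PIdx n k →₀ ℕ) :
    (∏ α : PIdx n k, (∏ j ∈ α.1, t j) ^ d α) = ∏ j : Fin n, t j ^ lcount d j := by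
  have h1 : ∀ α : PIdx n k, (∏ j ∈ α.1, t j) ^ d α
      = ∏ j : Fin n, t j ^ (if j ∈ α.1 then d α else 0) := by
    intro α
    rw [← Finset.prod_pow]
    have : ∀ j : Fin n, t j ^ (if j ∈ α.1 then d α else 0)
        = if j ∈ α.1 then t j ^ d α else 1 := by
      intro j; split_ifs <;> simp
    rw [Finset.prod_congr rfl fun j _ => this j, Finset.prod_ite_mem,
      Finset.univ_inter]
  rw [Finset.prod_congr rfl fun α _ => h1 α, Finset.prod_comm]
  refine Finset.prod_congr rfl fun j _ => ?_
  rw [Finset.prod_pow_eq_pow_sum]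
  rfl

lemma scaleHom_monomial (t : Fin n → ℝ) (d : PIdx n k →₀ ℕ) (a : ℝ) :
    scaleHom n k t (MvPolynomial.monomial d a)
      = (∏ j : Fin n, t j ^ lcount d j) • MvPolynomial.monomial d a := by
  rw [scaleHom, MvPolynomial.aeval_monomial]
  rw [Finsupp.prod_fintype _ _ (fun α => pow_zero _)]
  have h1 : ∀ α : PIdx n k,
      (MvPolynomial.C (∏ j ∈ α.1, t j) * MvPolynomial.X α) ^ d α
      = MvPolynomial.C ((∏ j ∈ α.1, t j) ^ d α) * (MvPolynomial.X α : MvPolynomial (PIdx n k) ℝ) ^ d α := by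
    intro α; rw [mul_pow, map_pow]
  rw [Finset.prod_congr rfl fun α _ => h1 α, Finset.prod_mul_distrib, ← map_prod,
    prod_pow_lcount]
  rw [MvPolynomial.smul_eq_C_mul, MvPolynomial.monomial_eq,
    Finsupp.prod_fintype _ _ (fun α => pow_zero _)]
  have : (algebraMap ℝ (MvPolynomial (PIdx n k) ℝ)) a = MvPolynomial.C a := rfl
  rw [this]
  ring

lemma scaleHom_linPoly (t : Fin n → ℝ) (w : PIdx n k → ℝ) :
    scaleHom n k t (linPoly w) = linPoly (fun α => (∏ j ∈ α.1, t j) * w α) := by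
  rw [linPoly, map_sum, linPoly]
  refine Finset.sum_congr rfl fun α _ => ?_
  rw [map_mul, scaleHom, MvPolynomial.aeval_C, MvPolynomial.aeval_X]
  have : (algebraMap ℝ (MvPolynomial (PIdx n k) ℝ)) (w α) = MvPolynomial.C (w α) := rfl
  rw [this, map_mul]
  ring

lemma wedgeCoords_scale (t : Fin n → ℝ) (x : Fin k → Fin n → ℝ) (α : PIdx n k) :
    wedgeCoords (fun i j => t j * x i j) α = (∏ j ∈ α.1, t j) * wedgeCoords x α := by
  have hprod : (∏ j : Fin k, t (toTuple α j)) = ∏ j ∈ α.1, t j := by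
    rw [← Finset.prod_coe_sort α.1 t]
    exact Equiv.prod_comp (α.1.orderIsoOfFin α.2).toEquiv (fun x : α.1 => t x)
  have : wedgeCoords (fun i j => t j * x i j) α
      = (Matrix.of fun i j => t (toTuple α j) * (Matrix.of fun i j => x i (toTuple α j)) i j).det := by
    rfl
  rw [this, Matrix.det_mul_row, hprod]
  rfl

lemma scaleHom_mem_V0 {m : ℕ} (t : Fin n → ℝ) {v : MvPolynomial (PIdx n k) ℝ}
    (hv : v ∈ V0 m n k) : scaleHom n k t v ∈ V0 m n k := by
  have hmap : Submodule.map (scaleHom n k t).toLinearMap (V0 m n k) ≤ V0 m n k := by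
    rw [V0, Submodule.map_span, Submodule.span_le]
    rintro p ⟨q, ⟨x, rfl⟩, rfl⟩
    refine Submodule.subset_span ⟨fun i j => t j * x i j, ?_⟩
    have : wedgeCoords (fun i j => t j * x i j)
        = fun α => (∏ j ∈ α.1, t j) * wedgeCoords x α :=
      funext fun α => wedgeCoords_scale t x α
    rw [this]
    simp only [AlgHom.toLinearMap_apply, map_pow, scaleHom_linPoly]
  exact hmap ⟨v, hv, rfl⟩

/-- Generic coefficient computation for "filtered" sums of monomials. -/
lemma coeff_filterSum (P : (PIdx n k →₀ ℕ) → Prop) [DecidablePred P] (p : MvPolynomial (PIdx n k) ℝ)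
    (e : PIdx n k →₀ ℕ) :
    MvPolynomial.coeff e
        (∑ d ∈ p.support, if P d then MvPolynomial.monomial d (p.coeff d) else 0)
      = if P e then p.coeff e else 0 := by
  rw [MvPolynomial.coeff_sum]
  have h1 : ∀ d ∈ p.support,
      MvPolynomial.coeff e (if P d then MvPolynomial.monomial d (p.coeff d) else 0)
        = if d = e then (if P d then p.coeff d else 0) else 0 := by
    intro d _
    split_ifs with h1 h2 h2 <;>
      simp_all [MvPolynomial.coeff_monomial]
  rw [Finset.sum_congr rfl h1, Finset.sum_ite_eq']
  by_cases he : e ∈ p.support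
  · simp [he]
  · have : p.coeff e = 0 := by
      simpa [MvPolynomial.mem_support_iff] using he
    simp [he, this]

/-- Extracting from `p` the monomials whose `i`-th occurrence count equals `ci`. -/
noncomputable def filt1 (i : Fin n) (ci : ℕ) (p : MvPolynomial (PIdx n k) ℝ) :
    MvPolynomial (PIdx n k) ℝ :=
  ∑ d ∈ p.support, if lcount d i = ci then MvPolynomial.monomial d (p.coeff d) else 0

lemma filt1_mem_V0 {m : ℕ} (i : Fin n) (ci : ℕ) {v : MvPolynomial (PIdx n k) ℝ}
    (hv : v ∈ V0 m n k) : filt1 i ci v ∈ V0 m n k := by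
  set N := v.support.sup (fun d => lcount d i) with hN
  set w : ℕ → MvPolynomial (PIdx n k) ℝ := fun j =>
    ∑ d ∈ v.support.filter (fun d => lcount d i = j),
      MvPolynomial.monomial d (v.coeff d) with hwdef
  have key : ∀ x : ℝ, (∑ j ∈ Finset.range (N + 1), x ^ j • w j) ∈ V0 m n k := by
    intro x
    have heq : ∑ j ∈ Finset.range (N + 1), x ^ j • w j
        = scaleHom n k (fun j => if j = i then x else 1) v := by
      have hrhs : scaleHom n k (fun j => if j = i then x else 1) v
          = ∑ d ∈ v.support, x ^ lcount d i • MvPolynomial.monomial d (v.coeff d) := by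
        conv_lhs => rw [← MvPolynomial.support_sum_monomial_coeff v]
        rw [map_sum]
        refine Finset.sum_congr rfl fun d _ => ?_
        rw [scaleHom_monomial]
        congr 1
        have h1 : ∀ j : Fin n, (if j = i then x else 1) ^ lcount d j
            = if j = i then x ^ lcount d i else 1 := by
          intro j; split_ifs with h <;> simp [h]
        rw [Finset.prod_congr rfl fun j _ => h1 j, Finset.prod_ite_eq' Finset.univ i
          (fun _ => x ^ lcount d i)]
        simp
      rw [hrhs, ← Finset.sum_fiberwise_of_maps_to
        (fun d hd => Finset.mem_range.2 (Nat.lt_succ_of_le (Finset.le_sup hd)))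
        (fun d => x ^ lcount d i • MvPolynomial.monomial d (v.coeff d))]
      refine Finset.sum_congr rfl fun j _ => ?_
      rw [hwdef, Finset.smul_sum]
      refine Finset.sum_congr rfl fun d hd => ?_
      have : lcount d i = j := (Finset.mem_filter.1 hd).2
      rw [this]
    rw [heq]
    exact scaleHom_mem_V0 _ hv
  have hfi : filt1 i ci v = w ci := by
    rw [filt1, hwdef]
    exact (Finset.sum_filter _ _).symm
  rw [hfi]
  by_cases hci : ci ≤ N
  · exact vand_extract _ N w key ci hci
  · have : w ci = 0 := by
      rw [hwdef]
      refine Finset.sum_eq_zero fun d hd => ?_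
      exfalso
      have h1 := (Finset.mem_filter.1 hd).2
      have h2 : lcount d i ≤ N := by
        rw [hN]
        exact Finset.le_sup (f := fun d => lcount d i) (Finset.mem_filter.1 hd).1
      omega
    rw [this]
    exact Submodule.zero_mem _

/-- Extracting the monomials whose occurrence counts agree with `c` on `s`. -/
noncomputable def pfilter (c : Fin n → ℕ) (s : Finset (Fin n))
    (p : MvPolynomial (PIdx n k) ℝ) : MvPolynomial (PIdx n k) ℝ :=
  ∑ d ∈ p.support, if (∀ i ∈ s, lcount d i = c i) then
    MvPolynomial.monomial d (p.coeff d) else 0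

lemma pfilter_empty (c : Fin n → ℕ) (p : MvPolynomial (PIdx n k) ℝ) :
    pfilter c ∅ p = p := by
  rw [pfilter]
  simp [MvPolynomial.support_sum_monomial_coeff]

lemma pfilter_insert (c : Fin n → ℕ) (i : Fin n) (s : Finset (Fin n))
    (p : MvPolynomial (PIdx n k) ℝ) :
    pfilter c (insert i s) p = filt1 i (c i) (pfilter c s p) := by
  apply MvPolynomial.ext
  intro e
  rw [pfilter, coeff_filterSum, filt1, coeff_filterSum, pfilter, coeff_filterSum]
  by_cases h1 : lcount e i = c i <;> by_cases h2 : ∀ j ∈ s, lcount e j = c j <;>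
    simp [Finset.forall_mem_insert, h1, h2]

lemma pfilter_mem_V0 {m : ℕ} (c : Fin n → ℕ) (s : Finset (Fin n))
    {v : MvPolynomial (PIdx n k) ℝ} (hv : v ∈ V0 m n k) :
    pfilter c s v ∈ V0 m n k := by
  induction s using Finset.induction_on with
  | empty => rw [pfilter_empty]; exact hv
  | insert _ _ hns ih =>
      rw [pfilter_insert]
      exact filt1_mem_V0 _ _ ih

lemma sum_lcount (d : PIdx n k →₀ ℕ) :
    (∑ i : Fin n, lcount d i) = k * ∑ α : PIdx n k, d α := by
  unfold lcount
  rw [Finset.sum_comm, Finset.mul_sum]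
  refine Finset.sum_congr rfl fun α _ => ?_
  have : (∑ i : Fin n, if i ∈ α.1 then d α else 0) = ∑ i ∈ α.1, d α := by
    rw [Finset.sum_ite_mem, Finset.univ_inter]
  rw [this, Finset.sum_const, α.2, smul_eq_mul]

end Aux

/-- For every vector `v ∈ V₀(m,n,k)` and every chain `σ`, the orthogonal
projection `Pr(v,σ)` of `v` onto `L(σ)` again belongs to `V₀(m,n,k)`. -/
theorem projChain_mem_V0 (m n k : ℕ) (hm : 1 ≤ m) (hk : 1 ≤ k) (hkn : k ≤ n)
    (c : Fin n → ℕ) (hc : IsChainType m n k c)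
    (v : MvPolynomial (PIdx n k) ℝ) (hv : v ∈ V0 m n k) :
    projChain m n k c v ∈ V0 m n k := by
  classical
  have hiff : ∀ d : PIdx n k →₀ ℕ, d ∈ chain m n k c ↔ ∀ i ∈ Finset.univ, lcount d i = c i := by
    intro d
    constructor
    · rintro ⟨-, h2⟩ i -
      rw [h2]
    · intro h
      have hl : lcount d = c := funext fun i => h i (Finset.mem_univ i)
      refine ⟨?_, hl⟩
      have h1 : (∑ i : Fin n, lcount d i) = k * ∑ α : PIdx n k, d α := sum_lcount d
      have h2 : (∑ i : Fin n, lcount d i) = m * k := by rw [hl]; exact hc.1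
      have : k * (∑ α : PIdx n k, d α) = k * m := by rw [← h1, h2, Nat.mul_comm]
      exact Nat.eq_of_mul_eq_mul_left hk this
  have heq : projChain m n k c v = pfilter c Finset.univ v := by
    rw [projChain, pfilter]
    refine Finset.sum_congr rfl fun d _ => ?_
    by_cases h : d ∈ chain m n k c
    · rw [if_pos h, if_pos ((hiff d).1 h)]
    · rw [if_neg h, if_neg (fun hh => h ((hiff d).2 hh))]
  rw [heq]
  exact pfilter_mem_V0 c Finset.univ hv
end
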